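/- Let G be a finite simple perfect graph and let (Q1,Q2) be an IC-partition of G realizing that G is an (r',ℓ')-graph. Let S be a subset of V(G) such that G − S is an (r,ℓ)-graph, and let (P1,P2) be an IC-partition of G − S realizing that G − S is an (r,ℓ)-graph. Then |(Q1 \ S) ∩ P2| + |(Q2 \ S) ∩ P1| ≤ r'·ℓ + r·ℓ'. -/

import Mathlib

variable {V : Type*}

/-- A set of vertices is an *independent set*: no two of its vertices are adjacent. -/
def IndepSet (G : SimpleGraph V) (s : Set V) : Prop :=
  s.Pairwise fun u v => ¬ G.Adj u v

/-- The set `W` can be partitioned into `r` (pairwise disjoint) independent sets of `G`. -/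
def PartitionIntoIndepSets (r : ℕ) (G : SimpleGraph V) (W : Set V) : Prop :=
  ∃ I : Fin r → Set V, (⋃ i, I i) = W ∧ Pairwise (Function.onFun Disjoint I) ∧
    ∀ i, IndepSet G (I i)

/-- The set `W` can be partitioned into `l` (pairwise disjoint) cliques of `G`. -/
def PartitionIntoCliques (l : ℕ) (G : SimpleGraph V) (W : Set V) : Prop :=
  ∃ K : Fin l → Set V, (⋃ j, K j) = W ∧ Pairwise (Function.onFun Disjoint K) ∧
    ∀ j, G.IsClique (K j)

/-- `(V1, V2)` is an IC-partition of the ground set `W` in `G`: `V1` and `V2` partition `W`,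
`V1` is partitioned into `r` independent sets and `V2` into `l` cliques. -/
def IsICPartitionOn (r l : ℕ) (G : SimpleGraph V) (W V1 V2 : Set V) : Prop :=
  Disjoint V1 V2 ∧ V1 ∪ V2 = W ∧
    PartitionIntoIndepSets r G V1 ∧ PartitionIntoCliques l G V2

/-- `(V1, V2)` is an IC-partition of `G` realizing that `G` is an `(r,l)`-graph. -/
def IsICPartition (r l : ℕ) (G : SimpleGraph V) (V1 V2 : Set V) : Prop :=
  IsICPartitionOn r l G Set.univ V1 V2

/-- `G` is an `(r,l)`-graph: its vertex set can be partitioned into `r` independent sets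
and `l` cliques. -/
def IsRLGraph (r l : ℕ) (G : SimpleGraph V) : Prop :=
  ∃ V1 V2 : Set V, IsICPartition r l G V1 V2

/-- A graph is *perfect* if for every induced subgraph the chromatic number equals the
clique number. -/
def IsPerfect (G : SimpleGraph V) : Prop :=
  ∀ W : Set V, (G.induce W).chromaticNumber = ((G.induce W).cliqueNum : ℕ∞)


lemma ncard_iUnion_le_sum {V : Type*} [Fintype V] {n : ℕ} (s : Fin n → Set V) :
    (⋃ i, s i).ncard ≤ ∑ i, (s i).ncard := by
  induction n with
  | zero => simp
  | succ n ih =>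
    have h : (⋃ i, s i) = s 0 ∪ ⋃ i : Fin n, s i.succ := by
      ext x; simp [Fin.exists_fin_succ]
    rw [h, Fin.sum_univ_succ]
    exact le_trans (Set.ncard_union_le _ _) (add_le_add (le_refl _) (ih _))

lemma indep_inter_clique_subsingleton {V : Type*} (G : SimpleGraph V) {s t : Set V}
    (hs : IndepSet G s) (ht : G.IsClique t) : (s ∩ t).Subsingleton := by
  intro u hu v hv
  by_contra h
  exact hs hu.1 hv.1 h (ht hu.2 hv.2 h)

lemma indep_clique_bound {V : Type*} [Fintype V] (G : SimpleGraph V) (r l : ℕ)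
    (A B : Set V) (hA : PartitionIntoIndepSets r G A) (hB : PartitionIntoCliques l G B) :
    (A ∩ B).ncard ≤ r * l := by
  obtain ⟨I, hIu, -, hI⟩ := hA
  obtain ⟨K, hKu, -, hK⟩ := hB
  have hsub : A ∩ B ⊆ ⋃ i, ⋃ j, I i ∩ K j := by
    rintro x ⟨hx1, hx2⟩
    rw [← hIu] at hx1; rw [← hKu] at hx2
    simp only [Set.mem_iUnion] at hx1 hx2 ⊢
    obtain ⟨i, hi⟩ := hx1; obtain ⟨j, hj⟩ := hx2
    exact ⟨i, j, hi, hj⟩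
  calc (A ∩ B).ncard ≤ (⋃ i, ⋃ j, I i ∩ K j).ncard :=
        Set.ncard_le_ncard hsub (Set.toFinite _)
    _ ≤ ∑ i, (⋃ j, I i ∩ K j).ncard := ncard_iUnion_le_sum _
    _ ≤ ∑ _i : Fin r, l := by
        refine Finset.sum_le_sum fun i _ => ?_
        calc (⋃ j, I i ∩ K j).ncard ≤ ∑ j, (I i ∩ K j).ncard := ncard_iUnion_le_sum _
          _ ≤ ∑ _j : Fin l, 1 := by
              refine Finset.sum_le_sum fun j _ => ?_
              exact (Set.ncard_le_one_iff_eq (Set.toFinite _)).mpr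
                (Set.Subsingleton.eq_empty_or_singleton
                  (indep_inter_clique_subsingleton G (hI i) (hK j)))
          _ = l := by simp
    _ = r * l := by simp [mul_comm]

/-- if `(Q1,Q2)` is an IC-partition of a perfect graph `G` realizing that `G`
is an `(r',l')`-graph, `S ⊆ V(G)`, and `(P1,P2)` is an IC-partition of `G - S` realizing
that `G - S` is an `(r,l)`-graph, then
`|(Q1 \ S) ∩ P2| + |(Q2 \ S) ∩ P1| ≤ r'·l + r·l'`. -/
theorem hamming_distance_bound_deletion {V : Type*} [Fintype V] (G : SimpleGraph V)
    (hG : IsPerfect G) (r l r' l' : ℕ) (Q1 Q2 : Set V)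
    (hQ : IsICPartition r' l' G Q1 Q2) (S : Set V) (P1 P2 : Set V)
    (hP : IsICPartitionOn r l G Sᶜ P1 P2) :
    ((Q1 \ S) ∩ P2).ncard + ((Q2 \ S) ∩ P1).ncard ≤ r' * l + r * l' := by
  obtain ⟨-, -, hQ1, hQ2⟩ := hQ
  obtain ⟨-, -, hP1, hP2⟩ := hP
  have h1 : ((Q1 \ S) ∩ P2).ncard ≤ r' * l := by
    refine le_trans (Set.ncard_le_ncard ?_ (Set.toFinite _)) (indep_clique_bound G r' l Q1 P2 hQ1 hP2)
    exact fun x ⟨hx1, hx2⟩ => ⟨hx1.1, hx2⟩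
  have h2 : ((Q2 \ S) ∩ P1).ncard ≤ r * l' := by
    have hs : (Q2 \ S) ∩ P1 ⊆ P1 ∩ Q2 := fun x ⟨hx1, hx2⟩ => ⟨hx2, hx1.1⟩
    refine le_trans (Set.ncard_le_ncard hs (Set.toFinite _)) ?_
    exact indep_clique_bound G r l' P1 Q2 hP1 hQ2
  omega
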